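/- Every pointed merge algebra of type 2 or of type 3 is faithful, i.e., σ̄ ≠ τ̄ for all distinct finite permutations σ, τ. -/

import Mathlib

universe u

open scoped Classical

/-- A finite permutation of ω: an element of S_ω, i.e. a permutation moving
only finitely many points. -/
def FinPerm (σ : Equiv.Perm ℕ) : Prop := {n : ℕ | σ n ≠ n}.Finite

/-- The raw operations of a merge algebra: the binary merges `⋆_n` and the
actions `σ̄` of (finite) permutations. -/
structure MergeOps (A : Type u) where
  star : ℕ → A → A → A
  bar : Equiv.Perm ℕ → A → A

namespace MergeOps

variable {A : Type u}

/-- `chain g k = ((g 0 ⋆_1 g 1) ⋆_2 g 2) … ⋆_k (g k)`. -/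
def chain (M : MergeOps A) (g : ℕ → A) : ℕ → A
  | 0 => g 0
  | i + 1 => M.star (i + 1) (M.chain g i) (g (i + 1))

/-- `chainStar g k y = ((…(g 0 ⋆_1 g 1) ⋆_2 …) ⋆_{k-1} g (k-1)) ⋆_k y`. -/
def chainStar (M : MergeOps A) (g : ℕ → A) (k : ℕ) (y : A) : A :=
  match k with
  | 0 => y
  | k + 1 => M.star (k + 1) (M.chain g k) y

/-- The `n`-coordinate of `x` relative to the coordinator `pt`:
`x[n] = τ̄^n_0(x) ⋆_1 pt`. -/
def coord (M : MergeOps A) (pt x : A) (n : ℕ) : A :=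
  M.star 1 (M.bar (Equiv.swap 0 n) x) pt

end MergeOps

/-- A merge algebra: operations `⋆_n` and `σ̄` satisfying axioms (B1)–(B7). -/
structure MergeAlgebra (A : Type u) extends MergeOps A where
  /-- (B1) each `⋆_n` is associative -/
  star_assoc : ∀ (n : ℕ) (x y z : A), star n (star n x y) z = star n x (star n y z)
  /-- (B1) each `⋆_n` is idempotent -/
  star_idem : ∀ (n : ℕ) (x : A), star n x x = x
  /-- (B2) -/
  star_zero : ∀ x y : A, star 0 x y = y
  /-- (B3), first part (k ≥ n) -/
  B3a : ∀ {n k : ℕ}, n ≤ k → ∀ x y z : A, star n (star k x y) z = star n x z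
  /-- (B3), second part (k ≥ n) -/
  B3b : ∀ {n k : ℕ}, n ≤ k → ∀ x y z : A, star k x (star n y z) = star k x z
  /-- (B4) (k < n) -/
  B4 : ∀ {n k : ℕ}, k < n → ∀ x y z : A, star n (star k x y) z = star k x (star n y z)
  /-- (B5) `σ̄(τ̄(x)) = (τ∘σ)‾(x)` -/
  B5 : ∀ σ τ : Equiv.Perm ℕ, FinPerm σ → FinPerm τ → ∀ x : A,
      bar σ (bar τ x) = bar (τ * σ) x
  /-- (B5) `ῑ(x) = x` -/
  bar_id : ∀ x : A, bar 1 x = x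
  /-- (B6): for `n ≤ k` and `σ` a permutation of `k`, with `f i = x` iff `σ i < n`:
  `σ̄(x ⋆_n y) = ((…(σ̄(f 0) ⋆_1 σ̄(f 1)) ⋆_2 …) ⋆_{k-1} σ̄(f (k-1))) ⋆_k y`. -/
  B6 : ∀ {n k : ℕ}, n ≤ k → ∀ σ : Equiv.Perm ℕ, (∀ i, k ≤ i → σ i = i) →
      ∀ x y : A, bar σ (star n x y) =
        toMergeOps.chainStar (fun i => bar σ (if σ i < n then x else y)) k y
  /-- (B7) -/
  B7 : ∀ {m n : ℕ} (σ τ : Equiv.Perm ℕ), FinPerm σ → FinPerm τ →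
      (∀ i, m ≤ i → i < n → σ i = τ i) →
      ∀ x y z : A, star n (star m z (bar σ x)) y = star n (star m z (bar τ x)) y

section Aux

lemma finPerm_mul {σ τ : Equiv.Perm ℕ} (hσ : FinPerm σ) (hτ : FinPerm τ) :
    FinPerm (σ * τ) := by
  refine Set.Finite.subset (hσ.union hτ) ?_
  intro n hn
  by_contra hc
  simp only [Set.mem_union, Set.mem_setOf_eq, not_or, not_not] at hc
  exact hn (by simp [Equiv.Perm.mul_apply, hc.1, hc.2])

lemma finPerm_inv {σ : Equiv.Perm ℕ} (hσ : FinPerm σ) : FinPerm σ⁻¹ := by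
  have hsub : {n : ℕ | σ⁻¹ n ≠ n} ⊆ σ '' {n : ℕ | σ n ≠ n} := by
    intro n hn
    refine ⟨σ⁻¹ n, ?_, by simp⟩
    simp only [Set.mem_setOf_eq] at hn ⊢
    rw [show σ (σ⁻¹ n) = n from σ.apply_symm_apply n]
    exact Ne.symm hn
  exact Set.Finite.subset (hσ.image σ) hsub

lemma finPerm_swap (a b : ℕ) : FinPerm (Equiv.swap a b) := by
  refine Set.Finite.subset ((Set.finite_singleton b).insert a) ?_
  intro n hn
  by_contra hc
  simp only [Set.mem_insert_iff, Set.mem_singleton_iff, not_or] at hc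
  exact hn (Equiv.swap_apply_of_ne_of_ne hc.1 hc.2)

variable {A : Type u} (M : MergeAlgebra A)

lemma star1_chain (g : ℕ → A) (pt : A) :
    ∀ j, M.star 1 (M.toMergeOps.chain g j) pt = M.star 1 (g 0) pt := by
  intro j
  induction j with
  | zero => rfl
  | succ j ih =>
    have : M.toMergeOps.chain g (j + 1)
        = M.star (j + 1) (M.toMergeOps.chain g j) (g (j + 1)) := rfl
    rw [this, M.B3a (Nat.succ_le_succ (Nat.zero_le j)), ih]

/-- Claim C: coordinates of `bar π x`. -/
lemma coord_bar (pt x : A) (π : Equiv.Perm ℕ) (hπ : FinPerm π) (k : ℕ) :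
    M.toMergeOps.coord pt (M.bar π x) k = M.toMergeOps.coord pt x (π k) := by
  unfold MergeOps.coord
  rw [M.B5 (Equiv.swap 0 k) π (finPerm_swap 0 k) hπ]
  have hag : ∀ i, 0 ≤ i → i < 1 → (π * Equiv.swap 0 k) i = (Equiv.swap 0 (π k)) i := by
    intro i _ hi
    interval_cases i
    simp [Equiv.Perm.mul_apply]
  have h7 := M.B7 (m := 0) (n := 1) (π * Equiv.swap 0 k) (Equiv.swap 0 (π k))
    (finPerm_mul hπ (finPerm_swap 0 k)) (finPerm_swap 0 (π k)) hag x pt pt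
  rwa [M.star_zero, M.star_zero] at h7

/-- Claim A: the 0-coordinate of `x ⋆_1 y` is that of `x`. -/
lemma coord_star_zero (pt x y : A) :
    M.toMergeOps.coord pt (M.star 1 x y) 0 = M.toMergeOps.coord pt x 0 := by
  unfold MergeOps.coord
  rw [Equiv.swap_self]
  have h1 : (1 : Equiv.Perm ℕ) = Equiv.refl ℕ := rfl
  rw [← h1, M.bar_id, M.bar_id, M.B3a (le_refl 1)]

/-- Claim B: for `k ≥ 1`, the `k`-coordinate of `x ⋆_1 y` is that of `y`. -/
lemma coord_star_pos (pt x y : A) (k : ℕ) (hk : 1 ≤ k) :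
    M.toMergeOps.coord pt (M.star 1 x y) k = M.toMergeOps.coord pt y k := by
  have hfix : ∀ i, k + 1 ≤ i → (Equiv.swap 0 k) i = i := by
    intro i hi
    exact Equiv.swap_apply_of_ne_of_ne (by omega) (by omega)
  have h6 := M.B6 (n := 1) (k := k + 1) (by omega) (Equiv.swap 0 k) hfix x y
  unfold MergeOps.coord
  rw [h6]
  set g : ℕ → A := fun i =>
    M.bar (Equiv.swap 0 k) (if (Equiv.swap 0 k) i < 1 then x else y) with hg
  have hcs : M.toMergeOps.chainStar g (k + 1) y
      = M.star (k + 1) (M.toMergeOps.chain g k) y := rfl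
  rw [hcs, M.B3a (by omega), star1_chain]
  have hg0 : g 0 = M.bar (Equiv.swap 0 k) y := by
    rw [hg]
    simp only [Equiv.swap_apply_left]
    rw [if_neg (by omega)]
  rw [hg0]

end Aux

/-- STATEMENT 9: every pointed merge algebra of type 2 (`1[k] ≠ 1[j]` for
`k ≠ j`) or of type 3 (`1[k] = 1` for all `k` but `a[n] ≠ 1` for some `a, n`)
is faithful: `σ̄ ≠ τ̄` for all distinct finite permutations `σ, τ`. -/
theorem type2_or_type3_faithful {A : Type u} (M : MergeAlgebra A) (pt : A)
    (h : (∀ k j : ℕ, k ≠ j → M.toMergeOps.coord pt pt k ≠ M.toMergeOps.coord pt pt j) ∨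
      ((∀ k : ℕ, M.toMergeOps.coord pt pt k = pt) ∧
        ∃ (a : A) (n : ℕ), M.toMergeOps.coord pt a n ≠ pt)) :
    ∀ σ τ : Equiv.Perm ℕ, FinPerm σ → FinPerm τ → σ ≠ τ → M.bar σ ≠ M.bar τ := by
  intro σ τ hσ hτ hne heq
  set ρ : Equiv.Perm ℕ := σ * τ⁻¹ with hρdef
  have hρ : FinPerm ρ := finPerm_mul hσ (finPerm_inv hτ)
  have hid : ∀ x : A, M.bar ρ x = x := by
    intro x
    have h1 : M.bar τ⁻¹ (M.bar σ x) = M.bar (σ * τ⁻¹) x :=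
      M.B5 τ⁻¹ σ (finPerm_inv hτ) hσ x
    have h2 : M.bar τ⁻¹ (M.bar τ x) = M.bar (τ * τ⁻¹) x :=
      M.B5 τ⁻¹ τ (finPerm_inv hτ) hτ x
    rw [heq] at h1
    rw [h2, mul_inv_cancel] at h1
    rw [hρdef, ← h1, M.bar_id]
  have hρ1 : ρ ≠ 1 := by
    intro h
    exact hne (by rwa [mul_inv_eq_one] at h)
  have hm : ∃ m, ρ m ≠ m := by
    by_contra hc
    push_neg at hc
    exact hρ1 (Equiv.ext hc)
  obtain ⟨m, hm⟩ := hm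
  rcases h with h1 | ⟨hall, a, n, han⟩
  · -- type 2
    have := coord_bar M pt pt ρ hρ m
    rw [hid pt] at this
    exact h1 m (ρ m) (Ne.symm hm) this
  · -- type 3
    set c' : A := M.star 1 (M.bar (Equiv.swap 0 n) a) pt with hc'
    have h0 : M.toMergeOps.coord pt c' 0 = M.toMergeOps.coord pt a n := by
      rw [hc', coord_star_zero, coord_bar M pt a _ (finPerm_swap 0 n) 0,
        Equiv.swap_apply_left]
    have hkpt : ∀ k, 1 ≤ k → M.toMergeOps.coord pt c' k = pt := by
      intro k hk
      rw [hc', coord_star_pos M pt _ _ k hk]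
      exact hall k
    set c : A := M.bar (Equiv.swap 0 m) c' with hc
    have e1 : M.toMergeOps.coord pt c m = M.toMergeOps.coord pt a n := by
      rw [hc, coord_bar M pt c' _ (finPerm_swap 0 m) m, Equiv.swap_apply_right, h0]
    have e2 : M.toMergeOps.coord pt c (ρ m) = pt := by
      rw [hc, coord_bar M pt c' _ (finPerm_swap 0 m) (ρ m)]
      apply hkpt
      rw [Nat.one_le_iff_ne_zero]
      intro hj
      apply hm
      have : (Equiv.swap 0 m) (ρ m) = (Equiv.swap 0 m) m := by
        rw [hj, Equiv.swap_apply_right]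
      exact (Equiv.swap 0 m).injective this
    have e3 : M.toMergeOps.coord pt c m = M.toMergeOps.coord pt c (ρ m) := by
      conv_lhs => rw [← hid c]
      exact coord_bar M pt c ρ hρ m
    exact han (by rw [← e1, e3, e2])
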